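/- arXiv:2406.07116 — 2 statements merged into one kernel-verified Lean document; each statement's English description precedes it below -/
import Mathlib

section
/- Let $s\ge 1$. Define for $\vec{k}=(k_1,\dots,k_6)\in\mathbb{Z}^6$ the quantities $\psi_{2s}(\vec{k}):=\sum_{j=1}^6(-1)^{j-1}|k_j|^{2s}$ and $\Omega(\vec{k}):=\sum_{j=1}^6(-1)^{j-1}k_j^2$. There exists a constant $C(s)>0$ such that for every $\vec{k}$ with $k_1-k_2+k_3-k_4+k_5-k_6=0$, one has $|\psi_{2s}(\vec{k})|\le C(s)\,|k_{(1)}|^{2s-2}\big(|\Omega(\vec{k})|+|k_{(3)}|^2\big)$, where $|k_{(1)}|\ge|k_{(2)}|\ge\cdots\ge|k_{(6)}|$ is a rearrangement of the $|k_j|$ in non-increasing order. -/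
open Real

private lemma bern_mvt {x y p : ℝ} (hy : 0 ≤ y) (hyx : y ≤ x) (hp : 1 ≤ p) :
    x ^ p - y ^ p ≤ p * x ^ (p - 1) * (x - y) := by
  rcases eq_or_lt_of_le (hy.trans hyx) with hx | hx
  · have hx0 : x = 0 := hx.symm
    have hy0 : y = 0 := le_antisymm (hyx.trans hx0.le) hy
    subst hx0; subst hy0
    simp
  · have hxne : x ≠ 0 := ne_of_gt hx
    have ht : (-1:ℝ) ≤ y / x - 1 := by
      have : 0 ≤ y / x := div_nonneg hy hx.le
      linarith
    have hB := one_add_mul_self_le_rpow_one_add ht hp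
    rw [show (1 + (y / x - 1)) = y / x by ring, Real.div_rpow hy hx.le] at hB
    have hxp : (0:ℝ) < x ^ p := Real.rpow_pos_of_pos hx p
    have h3 := mul_le_mul_of_nonneg_right hB (le_of_lt hxp)
    rw [div_mul_cancel₀ _ (ne_of_gt hxp)] at h3
    have h4 : x ^ (p - 1) = x ^ p / x := by
      rw [Real.rpow_sub hx, Real.rpow_one]
    rw [h4]
    have expand : (1 + p * (y / x - 1)) * x ^ p = x ^ p + p * (x ^ p / x) * (y - x) := by
      field_simp
    rw [expand] at h3
    linarith [h3]

private lemma L1 {s x M : ℝ} (hs : 1 ≤ s) (hx : 0 ≤ x) (hxM : x ≤ M) :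
    x ^ (2 * s) ≤ M ^ (2 * s - 2) * x ^ 2 := by
  rcases eq_or_lt_of_le hx with h0 | h0
  · rw [← h0, Real.zero_rpow (by positivity : (2 * s) ≠ 0)]
    simp
  · have h1 : x ^ (2 * s) = x ^ (2 * s - 2) * x ^ 2 := by
      rw [← Real.rpow_natCast x 2, ← Real.rpow_add h0]
      norm_num
    rw [h1]
    have h2 : x ^ (2 * s - 2) ≤ M ^ (2 * s - 2) :=
      Real.rpow_le_rpow hx hxM (by linarith)
    exact mul_le_mul_of_nonneg_right h2 (by positivity)

private lemma headlem {s a b : ℝ} (hs : 1 ≤ s) (hb : 0 ≤ b) (hba : b ≤ a) :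
    a ^ (2 * s) - b ^ (2 * s) ≤ s * a ^ (2 * s - 2) * (a ^ 2 - b ^ 2) := by
  have ha : 0 ≤ a := hb.trans hba
  have h := bern_mvt (x := a ^ 2) (y := b ^ 2) (by positivity) (by nlinarith) hs
  have e1 : ((a:ℝ) ^ 2) ^ s = a ^ (2 * s) := by
    rw [← Real.rpow_natCast a 2, ← Real.rpow_mul ha]
    norm_num
  have e1b : ((b:ℝ) ^ 2) ^ s = b ^ (2 * s) := by
    rw [← Real.rpow_natCast b 2, ← Real.rpow_mul hb]
    norm_num
  have e2 : ((a:ℝ) ^ 2) ^ (s - 1) = a ^ (2 * s - 2) := by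
    rw [← Real.rpow_natCast a 2, ← Real.rpow_mul ha]
    norm_num
    ring_nf
  rw [e1, e1b, e2] at h
  linarith

private lemma keylem (s : ℝ) (hs : 1 ≤ s) (a ε : Fin 6 → ℝ)
    (ha : ∀ i, 0 ≤ a i) (hmono : ∀ i j : Fin 6, i ≤ j → a j ≤ a i)
    (hε : ∀ i, ε i = 1 ∨ ε i = -1) :
    |∑ i : Fin 6, ε i * a i ^ (2 * s)| ≤
      100 * s * a 0 ^ (2 * s - 2) * (|∑ i : Fin 6, ε i * a i ^ 2| + a 2 ^ 2) := by
  have hs0 : (0:ℝ) < s := by linarith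
  have hX0 : (0:ℝ) ≤ a 0 ^ (2 * s - 2) := Real.rpow_nonneg (ha 0) _
  have hsX : (0:ℝ) ≤ s * a 0 ^ (2 * s - 2) := mul_nonneg hs0.le hX0
  have hP : ∀ i : Fin 6, a i ^ (2 * s) ≤ a 0 ^ (2 * s - 2) * a i ^ 2 := fun i =>
    L1 hs (ha i) (hmono 0 i (Fin.zero_le i))
  have hPn : ∀ i : Fin 6, 0 ≤ a i ^ (2 * s) := fun i => Real.rpow_nonneg (ha i) _
  have hsq : ∀ i : Fin 6, 2 ≤ i → a i ^ 2 ≤ a 2 ^ 2 := fun i hi =>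
    pow_le_pow_left₀ (ha i) (hmono 2 i hi) 2
  have hQ : ∀ i : Fin 6, 2 ≤ i → a i ^ (2 * s) ≤ a 0 ^ (2 * s - 2) * a 2 ^ 2 := fun i hi =>
    (hP i).trans (mul_le_mul_of_nonneg_left (hsq i hi) hX0)
  have hEB : ∀ i : Fin 6, 2 ≤ i →
      ε i * a i ^ (2 * s) ≤ a 0 ^ (2 * s - 2) * a 2 ^ 2 ∧
      -(a 0 ^ (2 * s - 2) * a 2 ^ 2) ≤ ε i * a i ^ (2 * s) := by
    intro i hi
    have h1 := hQ i hi
    have h2 := hPn i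
    have h3 : (0:ℝ) ≤ a 0 ^ (2 * s - 2) * a 2 ^ 2 := mul_nonneg hX0 (sq_nonneg _)
    rcases hε i with h | h <;> rw [h] <;> constructor <;> linarith
  have hWB : ∀ i : Fin 6, 2 ≤ i →
      ε i * a i ^ 2 ≤ a 2 ^ 2 ∧ -(a 2 ^ 2) ≤ ε i * a i ^ 2 := by
    intro i hi
    have h1 := hsq i hi
    have h2 := sq_nonneg (a i)
    have h3 := sq_nonneg (a 2)
    rcases hε i with h | h <;> rw [h] <;> constructor <;> linarith
  have w2 := hWB 2 le_rfl
  have w3 := hWB 3 (by decide)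
  have w4 := hWB 4 (by decide)
  have w5 := hWB 5 (by decide)
  have e2 := hEB 2 le_rfl
  have e3 := hEB 3 (by decide)
  have e4 := hEB 4 (by decide)
  have e5 := hEB 5 (by decide)
  have hhead := headlem hs (ha 1) (hmono 0 1 (by decide))
  have hhead0 : 0 ≤ a 0 ^ (2 * s) - a 1 ^ (2 * s) := by
    have := Real.rpow_le_rpow (ha 1) (hmono 0 1 (by decide)) (by linarith : (0:ℝ) ≤ 2 * s)
    linarith
  have hM1 : ∑ i : Fin 6, ε i * a i ^ 2 ≤ |∑ i : Fin 6, ε i * a i ^ 2| := le_abs_self _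
  have hM2 : -|∑ i : Fin 6, ε i * a i ^ 2| ≤ ∑ i : Fin 6, ε i * a i ^ 2 := neg_abs_le _
  have hMn : (0:ℝ) ≤ |∑ i : Fin 6, ε i * a i ^ 2| := abs_nonneg _
  nth_rewrite 1 [Fin.sum_univ_six] at hM1
  nth_rewrite 2 [Fin.sum_univ_six] at hM2
  have F1 : a 0 ^ 2 - a 1 ^ 2 ≤ |∑ i : Fin 6, ε i * a i ^ 2| + 4 * a 2 ^ 2 := by
    rcases hε 0 with h0 | h0 <;> rcases hε 1 with h1 | h1 <;>
      rw [h0, h1] at hM1 hM2 <;>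
      linarith [w2.1, w2.2, w3.1, w3.2, w4.1, w4.2, w5.1, w5.2, sq_nonneg (a 1)]
  have hd2 : s * a 0 ^ (2 * s - 2) * (a 0 ^ 2 - a 1 ^ 2) ≤
      s * a 0 ^ (2 * s - 2) * (|∑ i : Fin 6, ε i * a i ^ 2| + 4 * a 2 ^ 2) :=
    mul_le_mul_of_nonneg_left F1 hsX
  have hXM := mul_nonneg hX0 hMn
  have hXa := mul_nonneg hX0 (sq_nonneg (a 2))
  have hsXM := mul_nonneg hsX hMn
  have hsXa := mul_nonneg hsX (sq_nonneg (a 2))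
  have F2u : ε 0 * a 0 ^ (2 * s) + ε 1 * a 1 ^ (2 * s) ≤
      s * a 0 ^ (2 * s - 2) * (|∑ i : Fin 6, ε i * a i ^ 2| + 4 * a 2 ^ 2) +
      a 0 ^ (2 * s - 2) * (|∑ i : Fin 6, ε i * a i ^ 2| + 4 * a 2 ^ 2) := by
    rcases hε 0 with h0 | h0 <;> rcases hε 1 with h1 | h1 <;>
      rw [h0, h1] at hM1 hM2 ⊢
    · have hX1 := mul_le_mul_of_nonneg_left hM1 hX0
      linarith [hP 0, hP 1, mul_le_mul_of_nonneg_left w2.2 hX0,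
        mul_le_mul_of_nonneg_left w3.2 hX0, mul_le_mul_of_nonneg_left w4.2 hX0,
        mul_le_mul_of_nonneg_left w5.2 hX0]
    · linarith [hhead, hd2, hXM, hXa]
    · linarith [hhead0, hXM, hXa, hsXM, hsXa]
    · linarith [hPn 0, hPn 1, hXM, hXa, hsXM, hsXa]
  have F2l : -(s * a 0 ^ (2 * s - 2) * (|∑ i : Fin 6, ε i * a i ^ 2| + 4 * a 2 ^ 2) +
      a 0 ^ (2 * s - 2) * (|∑ i : Fin 6, ε i * a i ^ 2| + 4 * a 2 ^ 2)) ≤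
      ε 0 * a 0 ^ (2 * s) + ε 1 * a 1 ^ (2 * s) := by
    rcases hε 0 with h0 | h0 <;> rcases hε 1 with h1 | h1 <;>
      rw [h0, h1] at hM1 hM2 ⊢
    · linarith [hPn 0, hPn 1, hXM, hXa, hsXM, hsXa]
    · linarith [hhead0, hXM, hXa, hsXM, hsXa]
    · linarith [hhead, hd2, hXM, hXa]
    · have hX2 := mul_le_mul_of_nonneg_left hM2 hX0
      linarith [hP 0, hP 1, mul_le_mul_of_nonneg_left w2.1 hX0,
        mul_le_mul_of_nonneg_left w3.1 hX0, mul_le_mul_of_nonneg_left w4.1 hX0,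
        mul_le_mul_of_nonneg_left w5.1 hX0]
  have hXle : a 0 ^ (2 * s - 2) ≤ s * a 0 ^ (2 * s - 2) := by
    nlinarith [hX0]
  have hXMle := mul_le_mul_of_nonneg_right hXle hMn
  have hXale := mul_le_mul_of_nonneg_right hXle (sq_nonneg (a 2))
  rw [Fin.sum_univ_six (f := fun i => ε i * a i ^ (2 * s)), abs_le]
  constructor
  · linarith [F2l, e2.2, e3.2, e4.2, e5.2, hXMle, hXale, hsXM, hsXa]
  · linarith [F2u, e2.1, e3.1, e4.1, e5.1, hXMle, hXale, hsXM, hsXa]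

/-- Estimate on the symmetrized weight `ψ_{2s}`: for `s ≥ 1` there is `C(s) > 0` such that
whenever `k₁ - k₂ + k₃ - k₄ + k₅ - k₆ = 0` (with `τ` a permutation arranging the `|k_j|`
in non-increasing order),
`|ψ_{2s}(k)| ≤ C(s) |k_(1)|^(2s-2) (|Ω(k)| + |k_(3)|²)`. -/
theorem stmt2 (s : ℝ) (hs : 1 ≤ s) : ∃ C : ℝ, 0 < C ∧
    ∀ (k : Fin 6 → ℤ) (τ : Equiv.Perm (Fin 6)),
      (∀ i j : Fin 6, i ≤ j → |k (τ j)| ≤ |k (τ i)|) →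
      (∑ j : Fin 6, (-1 : ℤ) ^ (j : ℕ) * k j) = 0 →
      |∑ j : Fin 6, (-1 : ℝ) ^ (j : ℕ) * (|k j| : ℝ) ^ (2 * s)| ≤
        C * (|k (τ 0)| : ℝ) ^ (2 * s - 2) *
          ((|∑ j : Fin 6, (-1 : ℤ) ^ (j : ℕ) * (k j) ^ 2| : ℝ) + (|k (τ 2)| : ℝ) ^ 2) := by
  refine ⟨100 * s, by linarith, ?_⟩
  intro k τ hτ _
  have key := keylem s hs (fun i => |((k (τ i) : ℤ) : ℝ)|)
    (fun i => (-1 : ℝ) ^ ((τ i : Fin 6) : ℕ))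
    (fun i => abs_nonneg _)
    (fun i j hij => by
      have h : ((|k (τ j)| : ℤ) : ℝ) ≤ ((|k (τ i)| : ℤ) : ℝ) := Int.cast_le.mpr (hτ i j hij)
      push_cast at h
      simpa using h)
    (fun i => by
      rcases Nat.even_or_odd ((τ i : Fin 6) : ℕ) with h | h
      · exact Or.inl (Even.neg_one_pow h)
      · exact Or.inr (Odd.neg_one_pow h))
  push_cast
  rw [← Equiv.sum_comp τ (fun j : Fin 6 => (-1 : ℝ) ^ (j : ℕ) * |(k j : ℝ)| ^ (2 * s)),
      ← Equiv.sum_comp τ (fun j : Fin 6 => (-1 : ℝ) ^ (j : ℕ) * ((k j : ℝ)) ^ 2)]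
  simpa only [sq_abs] using key
end

section
/- Let $F:[0,\infty)\to[0,\infty)$ (or $F:\mathbb{R}\to[0,1]$) be differentiable and suppose there exist $C>0$ and $\beta\in(0,1)$ such that for every $p\in[1,\infty)$ and every $t$, $|F'(t)|\le C\,p^{\beta}\,F(t)^{1-1/p}$, with $0\le F\le 1$. Then choosing $p = 1+\log(1/F(0))$ yields, for all $t$, $F(t)\le F(0)\,\exp\big(C\,|t|\,e\,(1-\log F(0))^{\beta}\big)$ whenever $F(0)>0$. -/
set_option maxHeartbeats 1000000


/-- Integrating the family of differential inequalities `|F'(t)| ≤ C p^β F(t)^(1-1/p)`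
(for all `p ≥ 1`) for a differentiable function `0 ≤ F ≤ 1`, and optimizing with
`p = 1 + log(1/F(0))`, yields
`F(t) ≤ F(0) * exp(C |t| e (1 - log F(0))^β)` whenever `F(0) > 0`. -/
theorem stmt5 (F : ℝ → ℝ) (C β : ℝ) (hC : 0 < C) (hβ : β ∈ Set.Ioo (0:ℝ) 1)
    (hdiff : Differentiable ℝ F) (hF0 : ∀ t, 0 ≤ F t) (hF1 : ∀ t, F t ≤ 1)
    (hineq : ∀ p : ℝ, 1 ≤ p → ∀ t : ℝ, |deriv F t| ≤ C * p ^ β * (F t) ^ (1 - 1 / p))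
    (hpos : 0 < F 0) :
    ∀ t : ℝ, F t ≤ F 0 * Real.exp (C * |t| * Real.exp 1 * (1 - Real.log (F 0)) ^ β) := by
  intro t
  set p : ℝ := 1 - Real.log (F 0) with hp_def
  have hlog0 : Real.log (F 0) ≤ 0 := Real.log_nonpos (le_of_lt hpos) (hF1 0)
  have hp1 : 1 ≤ p := by simp [hp_def]; linarith
  have hp0 : 0 < p := lt_of_lt_of_le one_pos hp1
  have hpne : p ≠ 0 := ne_of_gt hp0
  set c : ℝ := 1 / p with hc_def
  have hc0 : 0 < c := by positivity
  have hc1 : c ≤ 1 := by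
    rw [hc_def, div_le_one hp0]; exact hp1
  set K : ℝ := C * p ^ (β - 1) with hK_def
  have hK0 : 0 < K := by
    have := Real.rpow_pos_of_pos hp0 (β - 1); positivity
  -- Step 1: for every ε > 0, the function (F + ε)^c is K-Lipschitz
  have key : ∀ ε > (0:ℝ), ∀ s : ℝ, (F s + ε) ^ c ≤ (F 0 + ε) ^ c + K * |s| := by
    intro ε hε s
    set g : ℝ → ℝ := fun s => (F s + ε) ^ c with hg_def
    have hA : ∀ s : ℝ, 0 < F s + ε := fun s => by have := hF0 s; linarith
    have hgd : ∀ s : ℝ, HasDerivAt g ((c * (F s + ε) ^ (c - 1)) * deriv F s) s := by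
      intro s
      have h1 : HasDerivAt (fun s => F s + ε) (deriv F s) s :=
        ((hdiff s).hasDerivAt).add_const ε
      have h2 : HasDerivAt (fun x : ℝ => x ^ c) (c * (F s + ε) ^ (c - 1)) (F s + ε) :=
        Real.hasDerivAt_rpow_const (Or.inl (ne_of_gt (hA s)))
      exact h2.comp s h1
    have hbound : ∀ s : ℝ, ‖deriv g s‖ ≤ K := by
      intro s
      rw [(hgd s).deriv]
      have hAs := hA s
      have hcp1 : (0:ℝ) < (F s + ε) ^ (c - 1) := Real.rpow_pos_of_pos hAs _
      have h3 : |deriv F s| ≤ C * p ^ β * (F s + ε) ^ (1 - c) := by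
        refine le_trans (hineq p hp1 s) ?_
        have h4 : (F s) ^ (1 - 1/p) ≤ (F s + ε) ^ (1 - c) := by
          rw [hc_def]
          exact Real.rpow_le_rpow (hF0 s) (by linarith) (by rw [← hc_def]; linarith)
        have h5 : 0 < C * p ^ β := by
          have := Real.rpow_pos_of_pos hp0 β; positivity
        nlinarith
      have h6 : ‖(c * (F s + ε) ^ (c - 1)) * deriv F s‖
          = c * (F s + ε) ^ (c - 1) * |deriv F s| := by
        rw [Real.norm_eq_abs, abs_mul, abs_mul, abs_of_pos hc0, abs_of_pos hcp1]
      rw [h6]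
      have h7 : c * (F s + ε) ^ (c - 1) * |deriv F s|
          ≤ c * (F s + ε) ^ (c - 1) * (C * p ^ β * (F s + ε) ^ (1 - c)) := by
        apply mul_le_mul_of_nonneg_left h3 (by positivity)
      refine le_trans h7 (le_of_eq ?_)
      have h8 : (F s + ε) ^ (c - 1) * (F s + ε) ^ (1 - c) = 1 := by
        rw [← Real.rpow_add hAs]; norm_num
      have h9 : c * p ^ β = p ^ (β - 1) := by
        rw [hc_def, sub_eq_add_neg, Real.rpow_add hp0, Real.rpow_neg_one]
        ring
      calc c * (F s + ε) ^ (c - 1) * (C * p ^ β * (F s + ε) ^ (1 - c))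
          = (c * p ^ β) * C * ((F s + ε) ^ (c - 1) * (F s + ε) ^ (1 - c)) := by ring
        _ = K := by rw [h8, h9, hK_def]; ring
    have hlip : ‖g s - g 0‖ ≤ K * ‖s - 0‖ :=
      Convex.norm_image_sub_le_of_norm_deriv_le
        (fun x _ => (hgd x).differentiableAt) (fun x _ => hbound x)
        convex_univ (Set.mem_univ 0) (Set.mem_univ s)
    rw [Real.norm_eq_abs, Real.norm_eq_abs, sub_zero] at hlip
    have hfin := le_trans (le_abs_self _) hlip
    have : g s ≤ g 0 + K * |s| := by linarith
    simpa [hg_def] using this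
  -- Step 2: let ε → 0
  have step2 : (F t) ^ c ≤ (F 0) ^ c + K * |t| := by
    have htend : Filter.Tendsto (fun ε : ℝ => (F 0 + ε) ^ c + K * |t|)
        (nhdsWithin 0 (Set.Ioi 0)) (nhds ((F 0) ^ c + K * |t|)) := by
      have h1 : ContinuousAt (fun ε : ℝ => (F 0 + ε) ^ c + K * |t|) 0 := by
        apply ContinuousAt.add _ continuousAt_const
        exact ContinuousAt.rpow_const (by fun_prop) (Or.inr (le_of_lt hc0))
      have := h1.continuousWithinAt (s := Set.Ioi 0)
      simpa using this.tendsto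
    refine ge_of_tendsto htend ?_
    filter_upwards [self_mem_nhdsWithin] with ε (hε : ε ∈ Set.Ioi 0)
    calc (F t) ^ c ≤ (F t + ε) ^ c :=
          Real.rpow_le_rpow (hF0 t) (by linarith [hε.out]) (le_of_lt hc0)
      _ ≤ (F 0 + ε) ^ c + K * |t| := key ε hε.out t
  -- Step 3: raise to power p and estimate
  have hA0 : (0:ℝ) < (F 0) ^ c := Real.rpow_pos_of_pos hpos c
  have step3 : F t ≤ ((F 0) ^ c + K * |t|) ^ p := by
    have h1 : ((F t) ^ c) ^ p ≤ ((F 0) ^ c + K * |t|) ^ p :=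
      Real.rpow_le_rpow (Real.rpow_nonneg (hF0 t) c) step2 (le_of_lt hp0)
    have h2 : ((F t) ^ c) ^ p = F t := by
      rw [← Real.rpow_mul (hF0 t), hc_def, one_div, inv_mul_cancel₀ hpne, Real.rpow_one]
    linarith
  set A : ℝ := (F 0) ^ c with hA_def
  set M : ℝ := K * |t| with hM_def
  have hM0 : 0 ≤ M := by positivity
  have hAp : A ^ p = F 0 := by
    rw [hA_def, ← Real.rpow_mul (le_of_lt hpos), hc_def, one_div,
      inv_mul_cancel₀ hpne, Real.rpow_one]
  have e1 : (A + M) ^ p = F 0 * (1 + M / A) ^ p := by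
    have hsum : A + M = A * (1 + M / A) := by field_simp
    rw [hsum, Real.mul_rpow (le_of_lt hA0) (by positivity), hAp]
  have e2 : (1 + M / A) ^ p ≤ Real.exp (p * (M / A)) := by
    have h3 : 1 + M / A ≤ Real.exp (M / A) := by
      have := Real.add_one_le_exp (M / A); linarith
    have h4 : (1 + M / A) ^ p ≤ (Real.exp (M / A)) ^ p :=
      Real.rpow_le_rpow (by positivity) h3 (le_of_lt hp0)
    have h5 : (Real.exp (M / A)) ^ p = Real.exp (p * (M / A)) := by
      rw [Real.rpow_def_of_pos (Real.exp_pos _), Real.log_exp, mul_comm]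
    linarith [h4, le_of_eq h5]
  -- 1/A ≤ e
  have hAe : Real.exp (-1) ≤ A := by
    rw [hA_def, Real.rpow_def_of_pos hpos]
    apply Real.exp_le_exp.mpr
    have hlgp : -p ≤ Real.log (F 0) := by rw [hp_def]; linarith
    have := mul_le_mul_of_nonneg_right hlgp (le_of_lt hc0)
    rw [hc_def] at this ⊢
    calc (-1 : ℝ) = -p * (1 / p) := by field_simp
      _ ≤ Real.log (F 0) * (1 / p) := this
  have hinvA : 1 / A ≤ Real.exp 1 := by
    rw [div_le_iff₀ hA0]
    calc (1:ℝ) = Real.exp 1 * Real.exp (-1) := by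
          rw [← Real.exp_add]; norm_num
      _ ≤ Real.exp 1 * A := by
          exact mul_le_mul_of_nonneg_left hAe (le_of_lt (Real.exp_pos 1))
  -- exponent comparison
  have hpK : p * K = C * p ^ β := by
    rw [hK_def]
    have h : p ^ (β - 1) * p ^ (1:ℝ) = p ^ β := by
      rw [← Real.rpow_add hp0]; norm_num
    rw [Real.rpow_one] at h
    nlinarith [h]
  have hpβ0 : 0 < p ^ β := Real.rpow_pos_of_pos hp0 β
  have e3 : p * (M / A) ≤ C * |t| * Real.exp 1 * p ^ β := by
    have heq : p * (M / A) = C * p ^ β * |t| * (1 / A) := by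
      rw [hM_def, ← hpK]; ring
    have h6 : C * p ^ β * |t| * (1 / A) ≤ C * p ^ β * |t| * Real.exp 1 :=
      mul_le_mul_of_nonneg_left hinvA (by positivity)
    have h7 : C * p ^ β * |t| * Real.exp 1 = C * |t| * Real.exp 1 * p ^ β := by ring
    linarith
  have e4 : Real.exp (p * (M / A)) ≤ Real.exp (C * |t| * Real.exp 1 * p ^ β) :=
    Real.exp_le_exp.mpr e3
  have hfinal : F t ≤ F 0 * Real.exp (C * |t| * Real.exp 1 * p ^ β) := by
    calc F t ≤ (A + M) ^ p := step3
      _ = F 0 * (1 + M / A) ^ p := e1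
      _ ≤ F 0 * Real.exp (p * (M / A)) := by
          exact mul_le_mul_of_nonneg_left e2 (le_of_lt hpos)
      _ ≤ F 0 * Real.exp (C * |t| * Real.exp 1 * p ^ β) := by
          exact mul_le_mul_of_nonneg_left e4 (le_of_lt hpos)
  simpa [hp_def] using hfinal
end
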